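/- There exists an open set U ⊆ 2^ω which is 𝒯-regular (Φ(U) = U) and whose frontier (boundary) has positive measure; e.g., the complement of the branches of the tree built from a sparse sequence of order ℓ_n = 2n satisfies μ(U) = 2/3, μ(U_t) ≤ 2/3 for every t in the complementary tree, and μ(Fr U) = 1/3 > 0. -/

import Mathlib

open MeasureTheory Filter Topology Set
open scoped ENNReal symmDiff

noncomputable section

/-- The Cantor space `2^ω`. -/
abbrev Cantor : Type := ℕ → Bool

/-- The first `n` digits of `x` as a finite binary string. -/
def seg (x : Cantor) (n : ℕ) : List Bool := List.ofFn (fun i : Fin n => x i)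

/-- The basic clopen set `N_s` of all extensions of the finite string `s`. -/
def cyl (s : List Bool) : Set Cantor := {x | seg x s.length = s}

/-- Concatenation `s⌢x` of a finite string with an infinite sequence. -/
def cat (s : List Bool) (x : Cantor) : Cantor :=
  fun n => if h : n < s.length then s.get ⟨n, h⟩ else x (n - s.length)

/-- The localization `A_s = {x : s⌢x ∈ A}` of `A` at `s`. -/
def loc (s : List Bool) (A : Set Cantor) : Set Cantor := {x | cat s x ∈ A}

/-- `Φ(A)`: the set of points of density `1` in `A`. -/
def dens1 (μ : Measure Cantor) (A : Set Cantor) : Set Cantor :=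
  {x | Tendsto (fun n => μ (A ∩ cyl (seg x n)) / μ (cyl (seg x n))) atTop (𝓝 1)}

/-- `μ` is the coin-tossing (Lebesgue) measure on Cantor space:
it gives each basic clopen set `N_s` measure `2^{-|s|}`. -/
def IsCoin (μ : Measure Cantor) : Prop :=
  ∀ s : List Bool, μ (cyl s) = (2 : ℝ≥0∞)⁻¹ ^ s.length

namespace Stmt19

def m : ℕ → ℕ
  | 0 => 0
  | n + 1 => m n + (n + 2)

lemma m_succ (n : ℕ) : m (n + 1) = m n + (n + 2) := rfl

lemma le_m (n : ℕ) : n ≤ m n := by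
  induction n with
  | zero => simp [m]
  | succ n ih => rw [m_succ]; omega

lemma m_mono : Monotone m := monotone_nat_of_le_succ fun n => by rw [m_succ]; omega

def A (k : ℕ) : Set Cantor := {x | ∀ i, m k ≤ i → i < m (k + 1) → x i = true}

def U : Set Cantor := ⋃ k, A k

lemma isOpen_A (k : ℕ) : IsOpen (A k) := by
  have h : A k = ⋂ i ∈ Finset.Ico (m k) (m (k + 1)), {x : Cantor | x i = true} := by
    ext x
    simp only [A, mem_setOf_eq, mem_iInter, Finset.mem_Ico]
    exact ⟨fun h i hi => h i hi.1 hi.2, fun h i h1 h2 => h i ⟨h1, h2⟩⟩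
  rw [h]
  refine isOpen_biInter_finset fun i _ => ?_
  show IsOpen ((fun p : Cantor => p i) ⁻¹' {true})
  exact IsOpen.preimage (continuous_apply i) (isOpen_discrete ({true} : Set Bool))

lemma isOpen_U : IsOpen U := isOpen_iUnion isOpen_A

lemma length_seg (x : Cantor) (n : ℕ) : (seg x n).length = n := List.length_ofFn

lemma mem_cyl_seg {x y : Cantor} {n : ℕ} : x ∈ cyl (seg y n) ↔ ∀ i < n, x i = y i := by
  unfold cyl
  rw [mem_setOf_eq, length_seg]
  unfold seg
  rw [List.ofFn_inj]
  constructor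
  · intro h i hi; exact congrFun h ⟨i, hi⟩
  · intro h; funext i; exact h i i.isLt

lemma meas_cyl {μ : Measure Cantor} (hμ : IsCoin μ) (y : Cantor) (n : ℕ) :
    μ (cyl (seg y n)) = 2⁻¹ ^ n := by rw [hμ, length_seg]

lemma measure_A_inter_le (μ : Measure Cantor) (hμ : IsCoin μ) (y : Cantor) (k L : ℕ)
    (hL : L ≤ m k) : μ (A k ∩ cyl (seg y L)) ≤ 2⁻¹ ^ L * 2⁻¹ ^ (k + 2) := by
  classical
  set a := m k - L with ha
  set g : (Fin a → Bool) → Cantor := fun f i =>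
    if h1 : i < L then y i else if h2 : i - L < a then f ⟨i - L, h2⟩ else true with hg
  have hsub : A k ∩ cyl (seg y L) ⊆ ⋃ f : Fin a → Bool, cyl (seg (g f) (m (k + 1))) := by
    rintro x ⟨hxA, hxc⟩
    rw [mem_cyl_seg] at hxc
    refine mem_iUnion.2 ⟨fun j => x (L + j), ?_⟩
    rw [mem_cyl_seg]
    intro i hi
    by_cases h1 : i < L
    · simp only [hg, dif_pos h1]; exact hxc i h1
    · push_neg at h1
      by_cases h2 : i - L < a
      · simp only [hg, dif_neg (not_lt.2 h1), dif_pos h2]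
        congr 1; omega
      · simp only [hg, dif_neg (not_lt.2 h1), dif_neg h2]
        exact hxA i (by omega) hi
  have hb : μ (A k ∩ cyl (seg y L)) ≤ ∑' f : Fin a → Bool, μ (cyl (seg (g f) (m (k + 1)))) :=
    (measure_mono hsub).trans (measure_iUnion_le _)
  have hc : ∑' f : Fin a → Bool, μ (cyl (seg (g f) (m (k + 1))))
      = (2 : ℝ≥0∞) ^ a * 2⁻¹ ^ (m (k + 1)) := by
    rw [tsum_fintype]
    simp only [meas_cyl hμ]
    rw [Finset.sum_const, Finset.card_univ, Fintype.card_fun, Fintype.card_bool,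
      Fintype.card_fin, nsmul_eq_mul]
    push_cast
    ring
  rw [hc] at hb
  refine hb.trans_eq ?_
  have hm : m (k + 1) = a + (L + (k + 2)) := by rw [m_succ]; omega
  rw [hm, pow_add, pow_add, ← mul_assoc, ← mul_pow,
    ENNReal.mul_inv_cancel (by norm_num) (by norm_num), one_pow, one_mul]

lemma not_mem_U_iff {x : Cantor} : x ∉ U ↔ ∀ k, ∃ i, m k ≤ i ∧ i < m (k + 1) ∧ x i = false := by
  simp only [U, mem_iUnion, not_exists, A, mem_setOf_eq]
  constructor
  · intro h k
    have := h k
    push_neg at this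
    obtain ⟨i, h1, h2, h3⟩ := this
    exact ⟨i, h1, h2, by simpa using h3⟩
  · rintro h k hk
    obtain ⟨i, h1, h2, h3⟩ := h k
    have := hk i h1 h2
    simp [this] at h3

lemma A_inter_empty {x : Cantor} (hx : x ∉ U) {k n : ℕ} (hk : k < n) :
    A k ∩ cyl (seg x (m n)) = ∅ := by
  rw [eq_empty_iff_forall_notMem]
  rintro y ⟨hyA, hyc⟩
  rw [mem_cyl_seg] at hyc
  obtain ⟨i, h1, h2, h3⟩ := not_mem_U_iff.1 hx k
  have hlt : i < m n := lt_of_lt_of_le h2 (m_mono (by omega : k + 1 ≤ n))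
  have e1 := hyc i hlt
  have e2 := hyA i h1 h2
  rw [e2, h3] at e1
  exact absurd e1 (by simp)

lemma ratio_bound (μ : Measure Cantor) (hμ : IsCoin μ) {x : Cantor} (hx : x ∉ U) (n : ℕ) :
    μ (U ∩ cyl (seg x (m n))) ≤ 2⁻¹ ^ (m n) * 2⁻¹ ^ (n + 1) := by
  have hsub : U ∩ cyl (seg x (m n)) ⊆ ⋃ j : ℕ, (A (n + j) ∩ cyl (seg x (m n))) := by
    rintro z ⟨hzU, hzc⟩
    obtain ⟨k, hk⟩ := mem_iUnion.1 hzU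
    have hkn : n ≤ k := by
      by_contra h
      push_neg at h
      have he := A_inter_empty hx h
      exact absurd (show z ∈ A k ∩ cyl (seg x (m n)) from ⟨hk, hzc⟩)
        (by rw [he]; exact notMem_empty z)
    exact mem_iUnion.2 ⟨k - n, by rw [Nat.add_sub_cancel' hkn]; exact ⟨hk, hzc⟩⟩
  have h1 : μ (U ∩ cyl (seg x (m n))) ≤ ∑' j : ℕ, μ (A (n + j) ∩ cyl (seg x (m n))) :=
    (measure_mono hsub).trans (measure_iUnion_le _)
  have h2 : ∑' j : ℕ, μ (A (n + j) ∩ cyl (seg x (m n)))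
      ≤ ∑' j : ℕ, 2⁻¹ ^ (m n) * (2⁻¹ ^ (n + 2) * 2⁻¹ ^ j) := by
    refine ENNReal.tsum_le_tsum fun j => ?_
    have hb := measure_A_inter_le μ hμ x (n + j) (m n) (m_mono (Nat.le_add_right n j))
    refine hb.trans_eq ?_
    rw [show n + j + 2 = (n + 2) + j by omega, pow_add]
  refine h1.trans (h2.trans ?_)
  rw [ENNReal.tsum_mul_left, ENNReal.tsum_mul_left, ENNReal.tsum_geometric,
    ENNReal.one_sub_inv_two, inv_inv]
  rw [pow_succ, pow_succ, mul_assoc, ENNReal.inv_mul_cancel (by norm_num) (by norm_num), mul_one]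

end Stmt19

theorem stmt19 (μ : Measure Cantor) (hμ : IsCoin μ) :
    ∃ U : Set Cantor, IsOpen U ∧ dens1 μ U = U ∧ 0 < μ (frontier U) := by
  classical
  refine ⟨Stmt19.U, Stmt19.isOpen_U, ?_, ?_⟩
  · apply Subset.antisymm
    · intro x hx
      by_contra hxU
      have h21 : (2⁻¹ : ℝ≥0∞) < 1 := by norm_num
      have hev := hx.eventually (eventually_gt_nhds h21)
      obtain ⟨N, hN⟩ := eventually_atTop.1 hev
      have hb := Stmt19.ratio_bound μ hμ hxU (N + 1)
      have hdiv : μ (Stmt19.U ∩ cyl (seg x (Stmt19.m (N + 1)))) / μ (cyl (seg x (Stmt19.m (N + 1))))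
          ≤ 2⁻¹ ^ (N + 2) := by
        rw [Stmt19.meas_cyl hμ]
        exact ENNReal.div_le_of_le_mul (by rw [mul_comm] at hb; exact hb)
      have hsmall : (2⁻¹ : ℝ≥0∞) ^ (N + 2) ≤ 2⁻¹ := by
        calc (2⁻¹ : ℝ≥0∞) ^ (N + 2) = 2⁻¹ ^ (N + 1) * 2⁻¹ := pow_succ _ _
        _ ≤ 1 * 2⁻¹ := mul_le_mul_left (pow_le_one' (by norm_num) _) _
        _ = 2⁻¹ := one_mul _
      have hNle : N ≤ Stmt19.m (N + 1) := le_trans (by omega) (Stmt19.le_m (N + 1))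
      exact absurd (hN _ hNle) (not_lt.2 (hdiv.trans hsmall))
    · intro x hx
      obtain ⟨k, hk⟩ := mem_iUnion.1 hx
      have key : ∀ n ≥ Stmt19.m (k + 1),
          (1 : ℝ≥0∞) = μ (Stmt19.U ∩ cyl (seg x n)) / μ (cyl (seg x n)) := by
        intro n hn
        have hsub : cyl (seg x n) ⊆ Stmt19.U := by
          intro y hy
          rw [Stmt19.mem_cyl_seg] at hy
          refine mem_iUnion.2 ⟨k, fun i h1 h2 => ?_⟩
          rw [hy i (lt_of_lt_of_le h2 hn)]
          exact hk i h1 h2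
        rw [inter_eq_right.2 hsub, Stmt19.meas_cyl hμ,
          ENNReal.div_self (pow_ne_zero _ (by norm_num)) (ENNReal.pow_ne_top (by norm_num))]
      exact Tendsto.congr' (eventually_atTop.2 ⟨Stmt19.m (k + 1), key⟩) tendsto_const_nhds
  · -- frontier
    have hdense : ∀ x : Cantor, x ∈ closure Stmt19.U := by
      intro x
      set y : ℕ → Cantor := fun n i => if Stmt19.m n ≤ i ∧ i < Stmt19.m (n + 1) then true else x i
        with hy
      have hyU : ∀ n, y n ∈ Stmt19.U := fun n =>
        mem_iUnion.2 ⟨n, fun i h1 h2 => by simp [hy, h1, h2]⟩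
      have hten : Tendsto y atTop (𝓝 x) := by
        rw [tendsto_pi_nhds]
        intro i
        refine tendsto_nhds_of_eventually_eq (eventually_atTop.2 ⟨i + 1, fun n hn => ?_⟩)
        have : i < Stmt19.m n := lt_of_lt_of_le hn (Stmt19.le_m n)
        simp [hy, not_and_of_not_left _ (not_le.2 (lt_of_lt_of_le this (le_refl _)))]
      exact mem_closure_of_tendsto hten (Eventually.of_forall hyU)
    have hfr : Stmt19.Uᶜ ⊆ frontier Stmt19.U := by
      intro x hx
      rw [frontier, Stmt19.isOpen_U.interior_eq]
      exact ⟨hdense x, hx⟩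
    have hμU : μ Stmt19.U ≤ 2⁻¹ := by
      have h1 : μ Stmt19.U ≤ ∑' k, μ (Stmt19.A k) := measure_iUnion_le _
      have h2 : ∀ k, μ (Stmt19.A k) ≤ 2⁻¹ ^ (k + 2) := by
        intro k
        have := Stmt19.measure_A_inter_le μ hμ (fun _ => true) k 0 (Nat.zero_le _)
        simp only [pow_zero, one_mul] at this
        refine le_trans (measure_mono ?_) this
        intro z hz
        exact ⟨hz, by rw [Stmt19.mem_cyl_seg]; intro i hi; omega⟩
      have h3 : ∑' k, μ (Stmt19.A k) ≤ ∑' k : ℕ, (2⁻¹ : ℝ≥0∞) ^ (k + 2) :=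
        ENNReal.tsum_le_tsum h2
      have h4 : ∑' k : ℕ, (2⁻¹ : ℝ≥0∞) ^ (k + 2) = 2⁻¹ := by
        rw [show (fun k : ℕ => (2⁻¹ : ℝ≥0∞) ^ (k + 2)) = fun k : ℕ => 2⁻¹ ^ 2 * 2⁻¹ ^ k from
          funext fun k => by rw [pow_add, mul_comm]]
        rw [ENNReal.tsum_mul_left, ENNReal.tsum_geometric, ENNReal.one_sub_inv_two, inv_inv]
        rw [pow_two, mul_assoc, ENNReal.inv_mul_cancel (by norm_num) (by norm_num), mul_one]
      exact h1.trans (h3.trans_eq h4)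
    have huniv : μ (univ : Set Cantor) = 1 := by
      have : (univ : Set Cantor) = cyl [] :=
        (Set.eq_univ_of_forall fun z => show seg z 0 = [] from List.ofFn_zero).symm
      rw [this, hμ]; norm_num
    have hcompl : 0 < μ Stmt19.Uᶜ := by
      rw [pos_iff_ne_zero]
      intro h0
      have : (1 : ℝ≥0∞) ≤ μ Stmt19.U + μ Stmt19.Uᶜ := by
        rw [← huniv, ← Set.union_compl_self Stmt19.U]
        exact measure_union_le _ _
      rw [h0, add_zero] at this
      exact absurd (this.trans hμU) (by norm_num)
    exact hcompl.trans_le (measure_mono hfr)
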